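/- a₁₁ᵀ·a₂₂ − a₂₁ᵀ·a₁₂ = ψ₁ψ₂·1ₙ − ψ₁·s_xz·(ξ*·z*) + s̄·s_xz·(z·z*) + ψ₁·(ξ*·ξ) − s̄·(z·ξ). (This is the (1,2)-block of A'ᵀ·S·A' for the 2n×2n matrix A' with blocks [[a₁₁,a₁₂],[a₂₁,a₂₂]] and S = [[0,1ₙ],[−1ₙ,0]].) -/
import Mathlib

open Matrix

lemma vmv_transpose {n : ℕ} (u v : Fin n → ℂ) :
    (Matrix.vecMulVec u v)ᵀ = Matrix.vecMulVec v u := by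
  ext i j; simp [Matrix.vecMulVec_apply, mul_comm]

lemma vmv_mul_vmv {n : ℕ} (u v w x : Fin n → ℂ) :
    Matrix.vecMulVec u v * Matrix.vecMulVec w x
      = (v ⬝ᵥ w) • Matrix.vecMulVec u x := by
  ext i j
  simp only [Matrix.mul_apply, Matrix.vecMulVec_apply, Matrix.smul_apply,
    dotProduct, Finset.sum_mul, smul_eq_mul, Finset.mul_sum]
  exact Finset.sum_congr rfl fun k _ => by ring

theorem stmt_19 (n : ℕ) (hn : 1 ≤ n) (s : ℂ) (z ξ : Fin n → ℂ) :
    let sxz : ℂ := s - ∑ i, ξ i * z i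
    let ψ₁r : ℝ := (∑ i, Complex.normSq (z i)) + 1
    let ψ₂r : ℝ := (∑ i, Complex.normSq (ξ i)) + Complex.normSq sxz
    let τr : ℝ := ψ₁r * ψ₂r
    let τ₀r : ℝ := Complex.normSq s
    let ψ₁ : ℂ := (ψ₁r : ℂ)
    let ψ₂ : ℂ := (ψ₂r : ℂ)
    let τ : ℂ := (τr : ℂ)
    let τ₀ : ℂ := (τ₀r : ℂ)
    let a11 : Matrix (Fin n) (Fin n) ℂ :=
      ψ₂ • 1 - sxz • Matrix.vecMulVec (star z) (star ξ)
        - star sxz • Matrix.vecMulVec ξ z + ψ₁ • Matrix.vecMulVec ξ (star ξ)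
    let a12 : Matrix (Fin n) (Fin n) ℂ :=
      ψ₁ • Matrix.vecMulVec ξ (star z) + Matrix.vecMulVec (star z) ξ
        - sxz • Matrix.vecMulVec (star z) (star z)
    let a21 : Matrix (Fin n) (Fin n) ℂ :=
      ψ₁ • Matrix.vecMulVec z (star ξ) + Matrix.vecMulVec (star ξ) z
        - star sxz • Matrix.vecMulVec z z
    let a22 : Matrix (Fin n) (Fin n) ℂ := ψ₁ • (1 + Matrix.vecMulVec z (star z))
    let A' : Matrix (Fin n ⊕ Fin n) (Fin n ⊕ Fin n) ℂ := Matrix.fromBlocks a11 a12 a21 a22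
    let b : Fin n ⊕ Fin n → ℂ :=
      Sum.elim (fun i => ψ₂ * star (z i) - ψ₁ * star sxz * ξ i)
               (fun i => ψ₁ * (star (ξ i) - star sxz * z i))
    a11ᵀ * a22 - a21ᵀ * a12
      = (ψ₁ * ψ₂) • (1 : Matrix (Fin n) (Fin n) ℂ)
          - (ψ₁ * sxz) • Matrix.vecMulVec (star ξ) (star z)
          + (star s * sxz) • Matrix.vecMulVec z (star z)
          + ψ₁ • Matrix.vecMulVec (star ξ) ξ
          - star s • Matrix.vecMulVec z ξ := by
  intro sxz ψ₁r ψ₂r τr τ₀r ψ₁ ψ₂ τ τ₀ a11 a12 a21 a22 A' b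
  have h1 : z ⬝ᵥ star z = ψ₁ - 1 := by
    simp only [ψ₁, ψ₁r, dotProduct, Pi.star_apply, Complex.star_def,
      Complex.mul_conj, Complex.ofReal_add, Complex.ofReal_sum, Complex.ofReal_one]
    ring
  have h1' : star z ⬝ᵥ z = ψ₁ - 1 := by
    rw [← h1]; simp only [dotProduct, Pi.star_apply]
    exact Finset.sum_congr rfl fun k _ => mul_comm _ _
  have h2 : star ξ ⬝ᵥ ξ = ψ₂ - sxz * star sxz := by
    have hs : sxz * star sxz = (Complex.normSq sxz : ℂ) := by
      rw [Complex.star_def]; exact Complex.mul_conj sxz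
    rw [show ψ₂ - sxz * star sxz
        = ((∑ i, Complex.normSq (ξ i) : ℝ) : ℂ) by
      simp only [ψ₂, ψ₂r, Complex.ofReal_add, hs]; ring]
    simp only [dotProduct, Pi.star_apply, Complex.ofReal_sum]
    refine Finset.sum_congr rfl fun k _ => ?_
    rw [mul_comm, Complex.star_def]; exact Complex.mul_conj (ξ k)
  have h3 : ξ ⬝ᵥ z = s - sxz := by simp [sxz, dotProduct]
  have h3' : z ⬝ᵥ ξ = s - sxz := by
    rw [← h3]; exact Finset.sum_congr rfl fun k _ => mul_comm _ _
  have h4 : star ξ ⬝ᵥ star z = star s - star sxz := by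
    have : star ξ ⬝ᵥ star z = star (ξ ⬝ᵥ z) := by
      simp [dotProduct, star_sum]
    rw [this, h3, star_sub]
  simp only [a11, a12, a21, a22, Matrix.transpose_add, Matrix.transpose_sub,
    Matrix.transpose_smul, Matrix.transpose_one, vmv_transpose, Matrix.add_mul,
    Matrix.sub_mul, Matrix.mul_add, Matrix.mul_sub, Matrix.smul_mul, Matrix.mul_smul,
    Matrix.one_mul, Matrix.mul_one, vmv_mul_vmv, smul_smul, h1, h1', h2, h3, h3', h4]
  module
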